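/- arXiv:2504.19874 — 2 statements merged into one kernel-verified Lean document; each statement's English description precedes it below -/
import Mathlib

section
/- Let d ≥ 1, let s be a random vector in ℝ^d with i.i.d. standard normal N(0,1) coordinates, let x ∈ ℝ^d be a unit vector (‖x‖₂ = 1), and let y ∈ ℝ^d be arbitrary. Then E[⟨s, y⟩ · sign(⟨s, x⟩)] = √(2/π) · ⟨x, y⟩. -/
open MeasureTheory ProbabilityTheory Real
open scoped NNReal ENNReal RealInnerProductSpace

noncomputable section

lemma gauss1_integral (f : ℝ → ℝ) :
    ∫ t, f t ∂(gaussianReal 0 1) = ∫ t, gaussianPDFReal 0 1 t * f t := by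
  rw [gaussianReal_of_var_ne_zero _ one_ne_zero]
  have h : (gaussianPDF 0 1) = fun t => ((Real.toNNReal (gaussianPDFReal 0 1 t) : ℝ≥0) : ℝ≥0∞) := by
    funext t; rfl
  rw [h, integral_withDensity_eq_integral_smul
    ((measurable_gaussianPDFReal 0 1).real_toNNReal) f]
  congr 1
  funext t
  simp [NNReal.smul_def, Real.coe_toNNReal _ (gaussianPDFReal_nonneg 0 1 t)]

lemma gauss1_pdf (t : ℝ) :
    gaussianPDFReal 0 1 t = (Real.sqrt (2 * π))⁻¹ * Real.exp (-(t ^ 2) / 2) := by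
  simp [gaussianPDFReal]

lemma integral_id_exp_Ioi : ∫ t in Set.Ioi (0:ℝ), t * Real.exp (-(t ^ 2) / 2) = 1 := by
  have hderiv : ∀ t ∈ Set.Ici (0:ℝ), HasDerivAt (fun u : ℝ => -Real.exp (-(u ^ 2) / 2))
      (t * Real.exp (-(t ^ 2) / 2)) t := by
    intro t _
    have h1 : HasDerivAt (fun u : ℝ => -(u ^ 2) / 2) (-t) t := by
      have := ((hasDerivAt_pow 2 t).neg).div_const 2
      refine this.congr_deriv ?_
      push_cast; ring
    have := (h1.exp).neg
    refine this.congr_deriv ?_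
    ring
  have hint : IntegrableOn (fun t : ℝ => t * Real.exp (-(t ^ 2) / 2)) (Set.Ioi 0) := by
    have := integrable_mul_exp_neg_mul_sq (b := 1/2) (by norm_num)
    refine (this.congr ?_).integrableOn
    exact Filter.Eventually.of_forall fun t => by ring_nf
  have htend : Filter.Tendsto (fun u : ℝ => -Real.exp (-(u ^ 2) / 2)) Filter.atTop (nhds 0) := by
    rw [← neg_zero]
    refine (Real.tendsto_exp_atBot.comp ?_).neg
    have : Filter.Tendsto (fun u : ℝ => u ^ 2) Filter.atTop Filter.atTop :=
      Filter.tendsto_pow_atTop (by norm_num)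
    apply Filter.Tendsto.atBot_div_const (by norm_num)
    exact Filter.tendsto_neg_atBot_iff.mpr this
  have := MeasureTheory.integral_Ioi_of_hasDerivAt_of_tendsto' hderiv hint htend
  simpa using this

lemma sqrt_two_pi_inv_mul_two : (Real.sqrt (2 * π))⁻¹ * 2 = Real.sqrt (2 / π) := by
  have hπ : (0:ℝ) < π := Real.pi_pos
  have h4 : Real.sqrt 4 = 2 := by
    rw [show (4:ℝ) = 2 ^ 2 by norm_num, Real.sqrt_sq (by norm_num)]
  have : (2:ℝ) / π = 4 / (2 * π) := by rw [div_eq_div_iff (by positivity) (by positivity)]; ring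
  rw [this, Real.sqrt_div (by norm_num : (0:ℝ) ≤ 4), h4, div_eq_inv_mul]

lemma gauss1_abs : ∫ t, |t| ∂(gaussianReal 0 1) = Real.sqrt (2 / π) := by
  rw [gauss1_integral]
  have h : (fun t : ℝ => gaussianPDFReal 0 1 t * |t|) =
      (fun t : ℝ => (fun u => (Real.sqrt (2 * π))⁻¹ * (u * Real.exp (-(u ^ 2) / 2))) |t|) := by
    funext t
    rw [gauss1_pdf]
    simp only [sq_abs]
    ring
  rw [h, integral_comp_abs (f := fun u => (Real.sqrt (2 * π))⁻¹ * (u * Real.exp (-(u ^ 2) / 2))),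
    integral_const_mul, integral_id_exp_Ioi]
  rw [mul_one, mul_comm]
  exact sqrt_two_pi_inv_mul_two

lemma lintegral_pi_prod {n : ℕ} (μ : Fin n → Measure ℝ) [∀ i, SigmaFinite (μ i)]
    (f : Fin n → ℝ → ℝ≥0∞) (hf : ∀ i, Measurable (f i)) :
    ∫⁻ s : Fin n → ℝ, ∏ i, f i (s i) ∂(Measure.pi μ) = ∏ i, ∫⁻ t, f i t ∂(μ i) := by
  induction n with
  | zero =>
    simp only [Finset.univ_eq_empty, Finset.prod_empty, lintegral_one, Measure.pi_univ]
  | succ n ih =>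
    have hmp := (measurePreserving_piFinSuccAbove μ 0).symm
    rw [← hmp.lintegral_comp_emb (MeasurableEquiv.measurableEmbedding _)]
    simp_rw [MeasurableEquiv.piFinSuccAbove_symm_apply, Fin.insertNthEquiv,
      Fin.prod_univ_succ, Fin.insertNth_zero, Equiv.coe_fn_mk,
      Fin.zero_succAbove, Fin.cons_zero, Fin.cons_succ, cast_eq]
    have hg : Measurable (fun b : Fin n → ℝ => ∏ i, f i.succ (b i)) :=
      Finset.measurable_prod _ fun i _ => (hf i.succ).comp (measurable_pi_apply i)
    rw [lintegral_prod_mul (f := f 0) (g := fun b : Fin n → ℝ => ∏ i, f i.succ (b i))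
      (hf 0).aemeasurable hg.aemeasurable]
    rw [ih _ (fun i => f i.succ) (fun i => hf i.succ)]

lemma gaussPi_eq_withDensity (d : ℕ) :
    (Measure.pi fun _ : Fin d => gaussianReal 0 1) =
      (volume : Measure (Fin d → ℝ)).withDensity
        (fun s => ∏ i, gaussianPDF 0 1 (s i)) := by
  refine Measure.pi_eq fun t ht => ?_
  have hmeas : Measurable (fun s : Fin d → ℝ => ∏ i, gaussianPDF 0 1 (s i)) :=
    Finset.measurable_prod _ fun i _ =>
      (measurable_gaussianPDF 0 1).comp (measurable_pi_apply i)
  rw [withDensity_apply _ (MeasurableSet.univ_pi ht)]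
  have key : ∀ s : Fin d → ℝ, (Set.univ.pi t).indicator
      (fun s : Fin d → ℝ => ∏ i, gaussianPDF 0 1 (s i)) s
      = ∏ i, (t i).indicator (gaussianPDF 0 1) (s i) := by
    intro s
    by_cases hs : s ∈ Set.univ.pi t
    · rw [Set.indicator_of_mem hs]
      refine Finset.prod_congr rfl fun i _ => ?_
      rw [Set.indicator_of_mem (hs i (Set.mem_univ i))]
    · rw [Set.indicator_of_notMem hs]
      obtain ⟨i, hi⟩ : ∃ i, s i ∉ t i := by simpa [Set.mem_pi] using hs
      refine (Finset.prod_eq_zero (Finset.mem_univ i) ?_).symm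
      rw [Set.indicator_of_notMem hi]
  rw [← lintegral_indicator (MeasurableSet.univ_pi ht)]
  simp_rw [key]
  rw [show (volume : Measure (Fin d → ℝ)) = Measure.pi fun _ => volume from volume_pi]
  rw [lintegral_pi_prod _ _ (fun i => (measurable_gaussianPDF 0 1).indicator (ht i))]
  refine Finset.prod_congr rfl fun i _ => ?_
  rw [lintegral_indicator (ht i), gaussianReal_apply 0 one_ne_zero]

lemma gaussPi_integral (d : ℕ) (f : (Fin d → ℝ) → ℝ) :
    ∫ s, f s ∂(Measure.pi fun _ : Fin d => gaussianReal 0 1) =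
      ∫ s, (∏ i, gaussianPDFReal 0 1 (s i)) * f s := by
  rw [gaussPi_eq_withDensity]
  have h : (fun s : Fin d → ℝ => ∏ i, gaussianPDF 0 1 (s i)) =
      fun s => ((∏ i, Real.toNNReal (gaussianPDFReal 0 1 (s i)) : ℝ≥0) : ℝ≥0∞) := by
    funext s
    push_cast
    rfl
  rw [h, integral_withDensity_eq_integral_smul
    (by exact Finset.measurable_prod _ fun i _ =>
      (measurable_gaussianPDFReal 0 1).real_toNNReal.comp (measurable_pi_apply i)) f]
  congr 1
  funext s
  rw [NNReal.smul_def, NNReal.coe_prod]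
  congr 1
  exact Finset.prod_congr rfl fun i _ => Real.coe_toNNReal _ (gaussianPDFReal_nonneg 0 1 _)

lemma gauss1_integrable_id : Integrable (fun t : ℝ => t) (gaussianReal 0 1) := by
  rw [gaussianReal_of_var_ne_zero _ one_ne_zero]
  rw [integrable_withDensity_iff (measurable_gaussianPDF 0 1)
    (Filter.Eventually.of_forall fun t => ENNReal.ofReal_lt_top)]
  have h : Integrable (fun t : ℝ => ((Real.sqrt (2 * π))⁻¹ * (t * Real.exp (-(1/2) * t ^ 2)))) :=
    (integrable_mul_exp_neg_mul_sq (by norm_num : (0:ℝ) < 1/2)).const_mul _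
  refine h.congr (Filter.Eventually.of_forall fun t => ?_)
  show (Real.sqrt (2 * π))⁻¹ * (t * Real.exp (-(1/2) * t ^ 2))
      = t * (ENNReal.ofReal (gaussianPDFReal 0 1 t)).toReal
  rw [ENNReal.toReal_ofReal (gaussianPDFReal_nonneg 0 1 t)]
  have : gaussianPDFReal 0 1 t = (Real.sqrt (2 * π))⁻¹ * Real.exp (-(t ^ 2) / 2) := by
    simp [gaussianPDFReal]
  rw [this]
  ring_nf

-- density depends only on the sum of squares
lemma prod_pdf_congr {d : ℕ} {s s' : Fin d → ℝ}
    (h : ∑ i, (s i) ^ 2 = ∑ i, (s' i) ^ 2) :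
    ∏ i, gaussianPDFReal 0 1 (s i) = ∏ i, gaussianPDFReal 0 1 (s' i) := by
  have key : ∀ u : Fin d → ℝ, ∏ i, gaussianPDFReal 0 1 (u i)
      = (Real.sqrt (2 * π))⁻¹ ^ d * Real.exp (-(∑ i, (u i) ^ 2) / 2) := by
    intro u
    simp_rw [gauss1_pdf]
    rw [Finset.prod_mul_distrib, Finset.prod_const, Finset.card_univ, Fintype.card_fin,
      ← Real.exp_sum]
    congr 1
    rw [← Finset.sum_div, ← Finset.sum_neg_distrib]
  rw [key, key, h]

-- invariance of the gaussian pi measure under linear isometries, at integral level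
lemma gaussPi_isometry (d : ℕ)
    (O : EuclideanSpace ℝ (Fin d) ≃ₗᵢ[ℝ] EuclideanSpace ℝ (Fin d))
    (F : (Fin d → ℝ) → ℝ) :
    ∫ s, F s ∂(Measure.pi fun _ : Fin d => gaussianReal 0 1) =
      ∫ c, F (((MeasurableEquiv.toLp 2 (Fin d → ℝ)).symm)
          (O (((MeasurableEquiv.toLp 2 (Fin d → ℝ)).symm).symm c)))
        ∂(Measure.pi fun _ : Fin d => gaussianReal 0 1) := by
  set e := (MeasurableEquiv.toLp 2 (Fin d → ℝ)).symm with he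
  set Teq : (Fin d → ℝ) ≃ᵐ (Fin d → ℝ) := (e.symm.trans O.toMeasurableEquiv).trans e with hTeq
  have mp_e : MeasurePreserving e volume volume :=
    EuclideanSpace.volume_preserving_symm_measurableEquiv_toLp (Fin d)
  have mp_O : MeasurePreserving (⇑O.toMeasurableEquiv)
      (volume : Measure (EuclideanSpace ℝ (Fin d))) volume := by
    rw [LinearIsometryEquiv.coe_toMeasurableEquiv]
    exact O.measurePreserving
  have hT : MeasurePreserving (⇑Teq) (volume : Measure (Fin d → ℝ)) volume := by
    have : ⇑Teq = ⇑e ∘ ⇑O.toMeasurableEquiv ∘ ⇑e.symm := rfl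
    rw [this]
    exact mp_e.comp (mp_O.comp (mp_e.symm e))
  have hsumsq : ∀ c : Fin d → ℝ, ∑ i, (Teq c i) ^ 2 = ∑ i, (c i) ^ 2 := by
    intro c
    have h1 : ∀ u : EuclideanSpace ℝ (Fin d), ∑ i, (u i) ^ 2 = ‖u‖ ^ 2 := by
      intro u
      rw [EuclideanSpace.norm_eq, Real.sq_sqrt (by positivity)]
      simp [Real.norm_eq_abs, sq_abs]
    have h2 : ∀ i, Teq c i = O (e.symm c) i := fun i => rfl
    simp_rw [h2]
    have h3 : ∑ i, (O (e.symm c) i) ^ 2 = ‖O (e.symm c)‖ ^ 2 := h1 _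
    rw [h3, O.norm_map, ← h1]
    rfl
  rw [gaussPi_integral, gaussPi_integral]
  calc ∫ s, (∏ i, gaussianPDFReal 0 1 (s i)) * F s
      = ∫ c, (∏ i, gaussianPDFReal 0 1 (Teq c i)) * F (Teq c) :=
        (hT.integral_comp' (fun s => (∏ i, gaussianPDFReal 0 1 (s i)) * F s)).symm
    _ = ∫ c, (∏ i, gaussianPDFReal 0 1 (c i)) * F (Teq c) := by
        congr 1
        funext c
        rw [prod_pdf_congr (hsumsq c)]
    _ = _ := rfl

-- pushforward of the pi gaussian along a coordinate evaluation
lemma gaussPi_map_eval (d : ℕ) (i : Fin d) :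
    Measure.map (fun s : Fin d → ℝ => s i)
      (Measure.pi fun _ : Fin d => gaussianReal 0 1) = gaussianReal 0 1 := by
  refine Measure.ext fun A hA => ?_
  rw [Measure.map_apply (measurable_pi_apply i) hA]
  have hset : (fun s : Fin d → ℝ => s i) ⁻¹' A
      = Set.univ.pi (fun j => if j = i then A else Set.univ) := by
    ext s
    simp only [Set.mem_preimage, Set.mem_pi, Set.mem_univ, true_implies]
    constructor
    · intro h j
      by_cases hj : j = i
      · subst hj; simp [h]
      · simp [hj]
    · intro h
      have := h i
      simpa using this
  rw [hset, Measure.pi_pi]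
  rw [Finset.prod_eq_single i (fun j _ hj => by simp [hj]) (fun h => absurd (Finset.mem_univ i) h)]
  simp

-- negation of one coordinate
def negAtFun {d : ℕ} (i : Fin d) (s : Fin d → ℝ) : Fin d → ℝ :=
  fun j => if j = i then -(s j) else s j

lemma negAtFun_measurable {d : ℕ} (i : Fin d) : Measurable (negAtFun i) := by
  refine measurable_pi_iff.mpr fun j => ?_
  unfold negAtFun
  by_cases hj : j = i
  · simp only [if_pos hj]; exact (measurable_pi_apply j).neg
  · simp only [if_neg hj]; exact measurable_pi_apply j

lemma negAtFun_invol {d : ℕ} (i : Fin d) (s : Fin d → ℝ) :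
    negAtFun i (negAtFun i s) = s := by
  funext j; unfold negAtFun; by_cases hj : j = i <;> simp [hj]

def negAt {d : ℕ} (i : Fin d) : (Fin d → ℝ) ≃ᵐ (Fin d → ℝ) where
  toFun := negAtFun i
  invFun := negAtFun i
  left_inv := negAtFun_invol i
  right_inv := negAtFun_invol i
  measurable_toFun := negAtFun_measurable i
  measurable_invFun := negAtFun_measurable i

lemma gauss1_map_neg : Measure.map (fun t : ℝ => -t) (gaussianReal 0 1) = gaussianReal 0 1 := by
  have h := gaussianReal_map_const_mul (μ := 0) (v := 1) (-1)
  have h2 : (fun t : ℝ => (-1) * t) = fun t : ℝ => -t := by funext t; ring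
  rw [h2] at h
  rw [h]
  norm_num

lemma negAt_measurePreserving {d : ℕ} (i : Fin d) :
    MeasurePreserving (negAt i) (Measure.pi fun _ : Fin d => gaussianReal 0 1)
      (Measure.pi fun _ : Fin d => gaussianReal 0 1) := by
  have h : ⇑(negAt i) = fun (s : Fin d → ℝ) (j : Fin d) =>
      (fun t => if j = i then -t else t) (s j) := rfl
  rw [h]
  refine measurePreserving_pi (fun _ => gaussianReal 0 1) (fun _ => gaussianReal 0 1)
    (f := fun (j : Fin d) (t : ℝ) => if j = i then -t else t) fun j => ?_
  by_cases hj : j = i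
  · simp only [if_pos hj]
    exact ⟨measurable_neg, gauss1_map_neg⟩
  · simp only [if_neg hj]
    exact MeasurePreserving.id _

-- derived facts
lemma integrable_coord {d : ℕ} (i : Fin d) :
    Integrable (fun s : Fin d → ℝ => s i) (Measure.pi fun _ : Fin d => gaussianReal 0 1) := by
  have h : Integrable (fun t : ℝ => t)
      (Measure.map (fun s : Fin d → ℝ => s i) (Measure.pi fun _ : Fin d => gaussianReal 0 1)) := by
    rw [gaussPi_map_eval]; exact gauss1_integrable_id
  exact (integrable_map_measure aestronglyMeasurable_id
    (measurable_pi_apply i).aemeasurable).mp h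

lemma integral_abs_coord {d : ℕ} (i : Fin d) :
    ∫ s, |s i| ∂(Measure.pi fun _ : Fin d => gaussianReal 0 1) = Real.sqrt (2 / π) := by
  have h := integral_map (μ := Measure.pi fun _ : Fin d => gaussianReal 0 1)
    (φ := fun s : Fin d → ℝ => s i) (measurable_pi_apply i).aemeasurable
    (f := fun t : ℝ => |t|) (by
      rw [gaussPi_map_eval]
      exact (continuous_abs.measurable).aestronglyMeasurable)
  rw [gaussPi_map_eval] at h
  rw [← h, gauss1_abs]


/-- Let `d ≥ 1`, let `s` be a random vector in `ℝ^d` with i.i.d. standard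
normal `N(0,1)` coordinates, let `x ∈ ℝ^d` be a unit vector and `y ∈ ℝ^d` arbitrary.  Then
`E[⟨s, y⟩ · sign(⟨s, x⟩)] = √(2/π) · ⟨x, y⟩`, where `sign(t) = 1` if `t ≥ 0` and `-1`
otherwise. -/
theorem statement_4 (d : ℕ) (hd : 1 ≤ d) (x y : Fin d → ℝ)
    (hx : ∑ i, x i ^ 2 = 1) :
    (∫ s, (∑ i, s i * y i) * (if 0 ≤ ∑ i, s i * x i then (1 : ℝ) else -1)
        ∂(Measure.pi fun _ : Fin d => gaussianReal 0 1))
      = Real.sqrt (2 / π) * ∑ i, x i * y i := by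
  set γd := (Measure.pi fun _ : Fin d => gaussianReal 0 1) with hγd
  set g : ℝ → ℝ := fun t => if 0 ≤ t then 1 else -1 with hgdef
  have hgmeas : Measurable g :=
    Measurable.ite (measurableSet_le measurable_const measurable_id)
      measurable_const measurable_const
  have hgbd : ∀ t : ℝ, ‖g t‖ ≤ 1 := by
    intro t; rw [hgdef]; dsimp only; split_ifs <;> simp
  have habs : ∀ t : ℝ, t * g t = |t| := by
    intro t; rw [hgdef]; dsimp only
    split_ifs with h
    · rw [mul_one, abs_of_nonneg h]
    · rw [mul_neg_one, abs_of_neg (not_le.mp h)]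
  set i0 : Fin d := ⟨0, hd⟩ with hi0
  set e := (MeasurableEquiv.toLp 2 (Fin d → ℝ)).symm with he
  set x' : EuclideanSpace ℝ (Fin d) := e.symm x with hx'
  set y' : EuclideanSpace ℝ (Fin d) := e.symm y with hy'
  have hx'i : ∀ i, x' i = x i := fun i => rfl
  have hy'i : ∀ i, y' i = y i := fun i => rfl
  -- orthonormal basis extending x'
  have hx'norm : ‖x'‖ = 1 := by
    rw [EuclideanSpace.norm_eq]
    have : ∀ i, ‖x' i‖ ^ 2 = x i ^ 2 := by
      intro i; rw [hx'i i, Real.norm_eq_abs, sq_abs]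
    simp_rw [this]
    rw [hx, Real.sqrt_one]
  have horth : Orthonormal ℝ (Set.restrict {i0} (fun _ : Fin d => x')) := by
    constructor
    · rintro ⟨i, hi⟩
      exact hx'norm
    · rintro ⟨i, hi⟩ ⟨j, hj⟩ hij
      exact absurd (Subtype.ext ((Set.mem_singleton_iff.mp hi).trans
        (Set.mem_singleton_iff.mp hj).symm)) hij
  obtain ⟨b, hb⟩ := horth.exists_orthonormalBasis_extension_of_card_eq
    (by rw [finrank_euclideanSpace_fin, Fintype.card_fin])
  have hbi0 : b i0 = x' := hb i0 rfl
  set O : EuclideanSpace ℝ (Fin d) ≃ₗᵢ[ℝ] EuclideanSpace ℝ (Fin d) := b.repr.symm with hO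
  set w : Fin d → ℝ := fun i => ⟪b i, y'⟫ with hw
  -- the two inner products after rotation
  have key : ∀ c : Fin d → ℝ,
      (∑ i, (e (O (e.symm c))) i * y i) * g (∑ i, (e (O (e.symm c))) i * x i)
        = ∑ i, w i * (c i * g (c i0)) := by
    intro c
    set ch : EuclideanSpace ℝ (Fin d) := e.symm c with hch
    have hchi : ∀ i, ch i = c i := fun i => rfl
    have happ : ∀ i, (e (O ch)) i = (O ch) i := fun i => rfl
    have hinner : ∀ v : EuclideanSpace ℝ (Fin d),
        ∑ i, (O ch) i * v i = ∑ i, c i * (b.repr v) i := by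
      intro v
      have h1 : ∑ i, (O ch) i * v i = ⟪O ch, v⟫ := by
        rw [PiLp.inner_apply]
        simp [RCLike.inner_apply, conj_trivial, mul_comm]
      have h2 : ⟪O ch, v⟫ = ⟪b.repr (O ch), b.repr v⟫ := (b.repr.inner_map_map _ _).symm
      have h3 : b.repr (O ch) = ch := b.repr.apply_symm_apply ch
      rw [h1, h2, h3, PiLp.inner_apply]
      simp [RCLike.inner_apply, conj_trivial, hchi, mul_comm]
    have hx2 : ∑ i, (e (O ch)) i * x i = c i0 := by
      simp_rw [happ]
      have : ∀ i, x i = x' i := fun i => rfl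
      simp_rw [this]
      rw [hinner x', ← hbi0, b.repr_self]
      simp [EuclideanSpace.single_apply]
    have hy2 : ∑ i, (e (O ch)) i * y i = ∑ i, c i * w i := by
      simp_rw [happ]
      have : ∀ i, y i = y' i := fun i => rfl
      simp_rw [this]
      rw [hinner y']
      refine Finset.sum_congr rfl fun i _ => ?_
      rw [hw]
      simp [b.repr_apply_apply]
    rw [hx2, hy2, Finset.sum_mul]
    exact Finset.sum_congr rfl fun i _ => by ring
  -- integrability of each term
  have hint : ∀ i : Fin d, Integrable (fun c : Fin d → ℝ => c i * g (c i0)) γd := by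
    intro i
    have h1 : Integrable (fun c : Fin d → ℝ => c i) γd := integrable_coord i
    have h2 := h1.bdd_mul
      ((hgmeas.comp (measurable_pi_apply i0)).aestronglyMeasurable)
      (Filter.Eventually.of_forall fun c => hgbd (c i0))
    exact h2.congr (Filter.Eventually.of_forall fun c => mul_comm _ _)
  -- terms with i ≠ i0 vanish
  have hzero : ∀ i : Fin d, i ≠ i0 → ∫ c, c i * g (c i0) ∂γd = 0 := by
    intro i hi
    have hmp := negAt_measurePreserving (d := d) i
    have hcomp := hmp.integral_comp' (fun c : Fin d → ℝ => c i * g (c i0))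
    have hptw : ∀ c : Fin d → ℝ,
        (negAt i c) i * g ((negAt i c) i0) = -(c i * g (c i0)) := by
      intro c
      have h1 : (negAt i c) i = -(c i) := by simp [negAt, negAtFun]
      have h2 : (negAt i c) i0 = c i0 := by
        have : i0 ≠ i := fun h => hi h.symm
        simp [negAt, negAtFun, this]
      rw [h1, h2]; ring
    have h2 : (∫ c, -(c i * g (c i0)) ∂γd) = ∫ c, c i * g (c i0) ∂γd := by
      calc (∫ c, -(c i * g (c i0)) ∂γd)
          = ∫ c, (negAt i c) i * g ((negAt i c) i0) ∂γd := by
            congr 1; funext c; rw [hptw c]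
        _ = _ := hcomp
    rw [integral_neg] at h2
    linarith
  -- the i0 term
  have hi0term : ∫ c, c i0 * g (c i0) ∂γd = Real.sqrt (2 / π) := by
    have : (fun c : Fin d → ℝ => c i0 * g (c i0)) = fun c => |c i0| := by
      funext c; exact habs (c i0)
    rw [this, hγd]
    exact integral_abs_coord i0
  have hwi0 : w i0 = ∑ i, x i * y i := by
    have h1 : w i0 = ⟪b i0, y'⟫ := rfl
    rw [h1, hbi0, PiLp.inner_apply]
    simp only [RCLike.inner_apply, conj_trivial]
    exact Finset.sum_congr rfl fun i _ => by rw [hx'i i, hy'i i, mul_comm]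
  calc (∫ s, (∑ i, s i * y i) * (if 0 ≤ ∑ i, s i * x i then (1 : ℝ) else -1) ∂γd)
      = ∫ s, (∑ i, s i * y i) * g (∑ i, s i * x i) ∂γd := rfl
    _ = ∫ c, (∑ i, (e (O (e.symm c))) i * y i) * g (∑ i, (e (O (e.symm c))) i * x i) ∂γd := by
        rw [hγd]
        exact gaussPi_isometry d O (fun s => (∑ i, s i * y i) * g (∑ i, s i * x i))
    _ = ∫ c, ∑ i, w i * (c i * g (c i0)) ∂γd := by
        congr 1; funext c; exact key c
    _ = ∑ i, ∫ c, w i * (c i * g (c i0)) ∂γd :=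
        integral_finset_sum _ (fun i _ => (hint i).const_mul (w i))
    _ = ∑ i, w i * ∫ c, c i * g (c i0) ∂γd := by
        refine Finset.sum_congr rfl fun i _ => ?_
        exact integral_const_mul _ _
    _ = w i0 * ∫ c, c i0 * g (c i0) ∂γd := by
        refine Finset.sum_eq_single i0 (fun i _ hi => ?_) (fun h => absurd (Finset.mem_univ i0) h)
        rw [hzero i hi, mul_zero]
    _ = Real.sqrt (2 / π) * ∑ i, x i * y i := by
        rw [hi0term, hwi0, mul_comm]
end
end

section
/- Let d ≥ 2, let u be a random vector distributed according to the uniform probability measure σ_d on the unit sphere S^{d−1} ⊂ ℝ^d, let x ∈ ℝ^d be a unit vector (‖x‖₂ = 1), and let y ∈ ℝ^d be arbitrary. Then E[⟨u, y⟩ · sign(⟨u, x⟩)] = E[|u_1|] · ⟨x, y⟩, where u_1 denotes the first coordinate of u. Consequently, for the 1-bit quantizer with reconstruction x̃ = √(2/(π d)) · Πᵀ · sign(Π x) (Π Haar-random orthogonal), the inner-product estimator ⟨y, x̃⟩ has expectation √(2/(π d)) · d · E[|u_1|] · ⟨x, y⟩, which is a multiplicatively biased estimate of ⟨x, y⟩.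 -/
open MeasureTheory Matrix Real
variable {d : ℕ}

noncomputable def house (w : Fin d → ℝ) : Matrix (Fin d) (Fin d) ℝ :=
  1 - (2 / ∑ i, w i ^ 2) • Matrix.vecMulVec w w

lemma house_transpose (w : Fin d → ℝ) : (house w)ᵀ = house w := by
  unfold house
  rw [transpose_sub, transpose_one, transpose_smul]
  congr 1
  ext i j
  simp [vecMulVec_apply, mul_comm]

lemma vecMulVec_mul_self (w : Fin d → ℝ) :
    vecMulVec w w * vecMulVec w w = (∑ i, w i ^ 2) • vecMulVec w w := by
  ext i j
  simp only [mul_apply, vecMulVec_apply, Matrix.smul_apply, smul_eq_mul]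
  rw [Finset.sum_mul]
  apply Finset.sum_congr rfl
  intros; ring

lemma house_mul_self (w : Fin d → ℝ) (hw : (∑ i, w i ^ 2) ≠ 0) :
    house w * house w = 1 := by
  unfold house
  set s := ∑ i, w i ^ 2 with hs
  set c := (2 / s) with hc
  set W := vecMulVec w w
  have expand : (1 - c • W) * (1 - c • W) = 1 - (c + c) • W + (c * c) • (W * W) := by
    simp only [sub_mul, mul_sub, one_mul, mul_one, Matrix.smul_mul, Matrix.mul_smul,
      smul_smul, add_smul]
    abel
  rw [expand, vecMulVec_mul_self, ← hs, smul_smul]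
  have : c * c * s = c + c := by rw [hc]; field_simp; ring
  rw [this]
  abel

lemma house_orth (w : Fin d → ℝ) (hw : (∑ i, w i ^ 2) ≠ 0) :
    (house w)ᵀ * house w = 1 := by
  rw [house_transpose]; exact house_mul_self w hw

lemma house_mulVec (w v : Fin d → ℝ) :
    (house w).mulVec v = v - ((2 * ∑ i, w i * v i) / ∑ i, w i ^ 2) • w := by
  unfold house
  rw [Matrix.sub_mulVec, Matrix.one_mulVec, Matrix.smul_mulVec]
  congr 1
  ext i
  simp only [Pi.smul_apply, smul_eq_mul, Matrix.mulVec, dotProduct, vecMulVec_apply]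
  have : ∑ x, w i * w x * v x = w i * ∑ x, w x * v x := by
    rw [Finset.mul_sum]
    apply Finset.sum_congr rfl
    intros; ring
  rw [this]
  ring

/-- there is a symmetric orthogonal matrix mapping one unit vector to another -/
lemma exists_orth (u w : Fin d → ℝ) (hu : ∑ i, u i ^ 2 = 1) (hw : ∑ i, w i ^ 2 = 1) :
    ∃ V : Matrix (Fin d) (Fin d) ℝ, Vᵀ * V = 1 ∧ Vᵀ = V ∧ V.mulVec u = w := by
  by_cases h : u = w
  · exact ⟨1, by simp, by simp, by simp [h]⟩
  · set z := u - w with hz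
    have hs : ∑ i, z i ^ 2 = 2 - 2 * ∑ i, u i * w i := by
      have e1 : ∑ i, z i ^ 2 = ∑ i, (u i ^ 2 + w i ^ 2 - 2 * (u i * w i)) := by
        apply Finset.sum_congr rfl
        intros i _
        simp only [hz, Pi.sub_apply]; ring
      rw [e1, Finset.sum_sub_distrib, Finset.sum_add_distrib, hu, hw, ← Finset.mul_sum]
      ring
    have hzu : ∑ i, z i * u i = 1 - ∑ i, u i * w i := by
      have e1 : ∑ i, z i * u i = ∑ i, (u i ^ 2 - u i * w i) := by
        apply Finset.sum_congr rfl
        intros i _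
        simp only [hz, Pi.sub_apply]; ring
      rw [e1, Finset.sum_sub_distrib, hu]
    have hsne : (∑ i, z i ^ 2) ≠ 0 := by
      intro h0
      apply h
      have hzz : ∀ i, z i = 0 := by
        intro i
        have := (Finset.sum_eq_zero_iff_of_nonneg (fun j _ => sq_nonneg (z j))).mp h0 i (Finset.mem_univ i)
        exact pow_eq_zero_iff (by norm_num) |>.mp this
      funext i
      have := hzz i
      simp only [hz, Pi.sub_apply] at this
      linarith
    refine ⟨house z, house_orth z hsne, house_transpose z, ?_⟩
    rw [house_mulVec]
    have hc : (2 * ∑ i, z i * u i) / ∑ i, z i ^ 2 = 1 := by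
      rw [hzu, hs]
      have h2 : (2 : ℝ) - 2 * ∑ i, u i * w i = 2 * (1 - ∑ i, u i * w i) := by ring
      have hne : (1 : ℝ) - ∑ i, u i * w i ≠ 0 := by
        intro h0
        apply hsne
        rw [hs, show (∑ i, u i * w i) = 1 by linarith]; ring
      rw [h2]
      field_simp
    rw [hc, one_smul, hz]
    abel
variable {d : ℕ}

lemma sum_sq_ne_zero_of_ne_zero {z : Fin d → ℝ} (h : z ≠ 0) : (∑ i, z i ^ 2) ≠ 0 := by
  intro h0
  apply h
  funext i
  have := (Finset.sum_eq_zero_iff_of_nonneg (fun j _ => sq_nonneg (z j))).mp h0 i (Finset.mem_univ i)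
  simpa using pow_eq_zero_iff (two_ne_zero) |>.mp this

lemma dot_mulVec_symm (V : Matrix (Fin d) (Fin d) ℝ) (hVsym : Vᵀ = V) (u v : Fin d → ℝ) :
    ∑ i, (V.mulVec u) i * v i = ∑ j, u j * (V.mulVec v) j := by
  have hV : ∀ i j, V i j = V j i := by
    intro i j
    have := congrFun (congrFun hVsym i) j
    simpa [Matrix.transpose_apply] using this.symm
  calc ∑ i, (V.mulVec u) i * v i = ∑ i, ∑ j, V i j * u j * v i := by
        apply Finset.sum_congr rfl; intro i _
        rw [Matrix.mulVec, dotProduct, Finset.sum_mul]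
    _ = ∑ j, ∑ i, V i j * u j * v i := Finset.sum_comm
    _ = ∑ j, u j * (V.mulVec v) j := by
        apply Finset.sum_congr rfl; intro j _
        rw [Matrix.mulVec, dotProduct, Finset.mul_sum]
        apply Finset.sum_congr rfl; intro i _
        rw [hV i j]; ring

lemma ae_sphere (σ : Measure (Fin d → ℝ)) (hσsupp : σ {u : Fin d → ℝ | ∑ i, u i ^ 2 = 1}ᶜ = 0) :
    ∀ᵐ u ∂σ, ∑ i, u i ^ 2 = 1 := by
  rw [ae_iff]
  exact hσsupp

lemma integrable_of_sphere_bound (σ : Measure (Fin d → ℝ)) [IsProbabilityMeasure σ]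
    (hσsupp : σ {u : Fin d → ℝ | ∑ i, u i ^ 2 = 1}ᶜ = 0)
    {f : (Fin d → ℝ) → ℝ} (hf : Measurable f) (C : ℝ)
    (hb : ∀ u, ∑ i, u i ^ 2 = 1 → |f u| ≤ C) : Integrable f σ := by
  refine ⟨hf.aestronglyMeasurable, HasFiniteIntegral.of_bounded (C := C) ?_⟩
  filter_upwards [ae_sphere σ hσsupp] with u hu
  rw [Real.norm_eq_abs]
  exact hb u hu

lemma meas_mulVec (M : Matrix (Fin d) (Fin d) ℝ) :
    Measurable (fun u : Fin d → ℝ => M.mulVec u) := by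
  apply measurable_pi_lambda
  intro i
  simp only [Matrix.mulVec, dotProduct]
  exact Finset.measurable_sum _ (fun j _ => (measurable_pi_apply j).const_mul _)

lemma meas_dot (y : Fin d → ℝ) : Measurable (fun u : Fin d → ℝ => ∑ i, u i * y i) :=
  Finset.measurable_sum _ (fun j _ => (measurable_pi_apply j).mul_const _)

lemma meas_sign (x : Fin d → ℝ) :
    Measurable (fun u : Fin d → ℝ => (if 0 ≤ ∑ i, u i * x i then (1 : ℝ) else -1)) := by
  apply Measurable.ite _ measurable_const measurable_const
  exact measurableSet_le measurable_const (meas_dot x)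

lemma cs_sphere {u v : Fin d → ℝ} (hu : ∑ i, u i ^ 2 = 1) :
    |∑ i, u i * v i| ≤ Real.sqrt (∑ i, v i ^ 2) := by
  have h := Finset.sum_mul_sq_le_sq_mul_sq Finset.univ u v
  rw [hu, one_mul] at h
  calc |∑ i, u i * v i| = Real.sqrt ((∑ i, u i * v i) ^ 2) := (Real.sqrt_sq_eq_abs _).symm
    _ ≤ Real.sqrt (∑ i, v i ^ 2) := Real.sqrt_le_sqrt h

lemma single_sq_sum (i0 : Fin d) : ∑ i, (Pi.single i0 1 : Fin d → ℝ) i ^ 2 = 1 := by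
  rw [Finset.sum_eq_single i0]
  · simp
  · intro b _ hb; simp [Pi.single_apply, hb]
  · simp

lemma dot_single (u : Fin d → ℝ) (i0 : Fin d) :
    ∑ i, u i * (Pi.single i0 1 : Fin d → ℝ) i = u i0 := by
  rw [Finset.sum_eq_single i0]
  · simp
  · intro b _ hb; simp [Pi.single_apply, hb]
  · simp

/-- substitution under an invariant measure -/
lemma integral_sub_inv (σ : Measure (Fin d → ℝ)) (V : Matrix (Fin d) (Fin d) ℝ)
    (hV : Measure.map V.mulVec σ = σ) {f : (Fin d → ℝ) → ℝ} (hf : Measurable f) :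
    ∫ u, f u ∂σ = ∫ u, f (V.mulVec u) ∂σ := by
  conv_lhs => rw [← hV]
  rw [integral_map]
  · exact (meas_mulVec V).aemeasurable
  · exact hf.aestronglyMeasurable

lemma part1 (hd : 0 < d) (x y : Fin d → ℝ) (hx : ∑ i, x i ^ 2 = 1)
    (σ : Measure (Fin d → ℝ)) [IsProbabilityMeasure σ]
    (hσsupp : σ {u : Fin d → ℝ | ∑ i, u i ^ 2 = 1}ᶜ = 0)
    (hσinv : ∀ U : Matrix (Fin d) (Fin d) ℝ, Uᵀ * U = 1 → Measure.map U.mulVec σ = σ) :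
    (∫ u, (∑ i, u i * y i) * (if 0 ≤ ∑ i, u i * x i then (1 : ℝ) else -1) ∂σ)
      = (∫ u, |u ⟨0, hd⟩| ∂σ) * ∑ i, x i * y i := by
  set α := ∑ i, x i * y i with hα
  set z := fun i => y i - α * x i with hzdef
  -- pointwise decomposition
  have key : ∀ u : Fin d → ℝ,
      (∑ i, u i * y i) * (if 0 ≤ ∑ i, u i * x i then (1 : ℝ) else -1)
        = α * |∑ i, u i * x i|
          + (∑ i, u i * z i) * (if 0 ≤ ∑ i, u i * x i then (1 : ℝ) else -1) := by
    intro u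
    have hsplit : ∑ i, u i * y i = α * (∑ i, u i * x i) + ∑ i, u i * z i := by
      rw [Finset.mul_sum, ← Finset.sum_add_distrib]
      apply Finset.sum_congr rfl
      intro i _
      simp only [hzdef]; ring
    rw [hsplit]
    rcases le_or_gt 0 (∑ i, u i * x i) with h | h
    · rw [if_pos h, abs_of_nonneg h]; ring
    · rw [if_neg (not_le.mpr h), abs_of_neg h]; ring
  simp only [key]
  -- integrability
  have int1 : Integrable (fun u : Fin d → ℝ => α * |∑ i, u i * x i|) σ := by
    apply integrable_of_sphere_bound σ hσsupp ((meas_dot x).abs.const_mul α) (|α| * 1)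
    intro u hu
    rw [abs_mul, abs_abs]
    exact mul_le_mul_of_nonneg_left (by simpa [hx] using cs_sphere (v := x) hu) (abs_nonneg α)
  have int2 : Integrable (fun u : Fin d → ℝ =>
      (∑ i, u i * z i) * (if 0 ≤ ∑ i, u i * x i then (1 : ℝ) else -1)) σ := by
    apply integrable_of_sphere_bound σ hσsupp ((meas_dot z).mul (meas_sign x))
      (Real.sqrt (∑ i, z i ^ 2))
    intro u hu
    simp only [Pi.mul_apply]
    rw [abs_mul]
    have h1 : |if 0 ≤ ∑ i, u i * x i then (1:ℝ) else -1| = 1 := by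
      split <;> simp
    rw [h1, mul_one]
    exact cs_sphere hu
  rw [integral_add int1 int2]
  -- second integral vanishes
  have hzero : ∫ u, (∑ i, u i * z i) * (if 0 ≤ ∑ i, u i * x i then (1 : ℝ) else -1) ∂σ = 0 := by
    by_cases hz : z = 0
    · simp [hz]
    · have hzs := sum_sq_ne_zero_of_ne_zero hz
      set R := house z with hR
      have hRsym := house_transpose z
      have hRx : R.mulVec x = x := by
        rw [hR, house_mulVec]
        have : ∑ i, z i * x i = 0 := by
          have e1 : ∑ i, z i * x i = (∑ i, x i * y i) - α * ∑ i, x i ^ 2 := by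
            rw [Finset.mul_sum, ← Finset.sum_sub_distrib]
            apply Finset.sum_congr rfl
            intro i _
            simp only [hzdef]; ring
          rw [e1, hx, ← hα]; ring
        rw [this]
        simp
      have hRz : R.mulVec z = -z := by
        rw [hR, house_mulVec]
        have e1 : ∑ i, z i * z i = ∑ i, z i ^ 2 := by
          apply Finset.sum_congr rfl; intros; ring
        rw [e1, mul_div_assoc, div_self hzs, mul_one]
        have h2 : ((2:ℝ)) • z = z + z := two_smul ℝ z
        rw [h2]
        abel
      have hpt : ∀ u : Fin d → ℝ,
          (∑ i, (R.mulVec u) i * z i) * (if 0 ≤ ∑ i, (R.mulVec u) i * x i then (1:ℝ) else -1)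
            = -((∑ i, u i * z i) * (if 0 ≤ ∑ i, u i * x i then (1:ℝ) else -1)) := by
        intro u
        rw [dot_mulVec_symm R hRsym u z, dot_mulVec_symm R hRsym u x, hRx, hRz]
        have hneg : ∑ j, u j * (-z) j = -∑ j, u j * z j := by
          rw [← Finset.sum_neg_distrib]
          apply Finset.sum_congr rfl
          intros; simp
        rw [hneg]
        ring
      have hsub := integral_sub_inv σ R (hσinv R (by rw [hR]; exact house_orth z hzs))
        ((meas_dot z).mul (meas_sign x))
      simp only [Pi.mul_apply] at hsub
      have : ∫ u, (∑ i, u i * z i) * (if 0 ≤ ∑ i, u i * x i then (1:ℝ) else -1) ∂σ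
          = -∫ u, (∑ i, u i * z i) * (if 0 ≤ ∑ i, u i * x i then (1:ℝ) else -1) ∂σ := by
        conv_lhs => rw [hsub]
        simp only [hpt]
        rw [integral_neg]
      linarith
  rw [hzero, add_zero, integral_const_mul]
  -- first integral
  obtain ⟨V, hV1, hVsym, hVx⟩ := exists_orth x (Pi.single ⟨0, hd⟩ 1) hx (single_sq_sum _)
  have habs : ∫ u, |∑ i, u i * x i| ∂σ = ∫ u, |u ⟨0, hd⟩| ∂σ := by
    rw [integral_sub_inv σ V (hσinv V hV1) (meas_dot x).abs]
    apply integral_congr_ae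
    apply ae_of_all
    intro u
    simp only []
    rw [dot_mulVec_symm V hVsym u x, hVx, dot_single]
  rw [habs]
  ring

instance matrixMeasurableSpace {d : ℕ} : MeasurableSpace (Matrix (Fin d) (Fin d) ℝ) :=
  MeasurableSpace.pi

section nu
variable {d : ℕ}

lemma meas_entry (i j : Fin d) : Measurable (fun P : Matrix (Fin d) (Fin d) ℝ => P i j) :=
  ((measurable_pi_apply i).comp measurable_id).eval

lemma meas_transpose : Measurable (fun P : Matrix (Fin d) (Fin d) ℝ => Pᵀ) := by
  apply measurable_pi_lambda; intro i
  apply measurable_pi_lambda; intro j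
  exact meas_entry j i

lemma meas_mul_left (U : Matrix (Fin d) (Fin d) ℝ) :
    Measurable (fun P : Matrix (Fin d) (Fin d) ℝ => U * P) := by
  apply measurable_pi_lambda; intro i
  apply measurable_pi_lambda; intro j
  simp only [Matrix.mul_apply]
  exact Finset.measurable_sum _ (fun k _ => (meas_entry k j).const_mul _)

lemma meas_mul_right (V : Matrix (Fin d) (Fin d) ℝ) :
    Measurable (fun P : Matrix (Fin d) (Fin d) ℝ => P * V) := by
  apply measurable_pi_lambda; intro i
  apply measurable_pi_lambda; intro j
  simp only [Matrix.mul_apply]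
  exact Finset.measurable_sum _ (fun k _ => (meas_entry i k).mul_const _)

lemma meas_mulVec_pt (u : Fin d → ℝ) :
    Measurable (fun P : Matrix (Fin d) (Fin d) ℝ => P.mulVec u) := by
  apply measurable_pi_lambda; intro i
  simp only [Matrix.mulVec, dotProduct]
  exact Finset.measurable_sum _ (fun j _ => (meas_entry i j).mul_const _)

lemma meas_mul2 : Measurable (fun p : Matrix (Fin d) (Fin d) ℝ × Matrix (Fin d) (Fin d) ℝ => p.1 * p.2) := by
  apply measurable_pi_lambda; intro i
  apply measurable_pi_lambda; intro j
  simp only [Matrix.mul_apply]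
  exact Finset.measurable_sum _ (fun k _ =>
    ((meas_entry i k).comp measurable_fst).mul ((meas_entry k j).comp measurable_snd))

lemma meas_mulVec2 : Measurable (fun p : Matrix (Fin d) (Fin d) ℝ × (Fin d → ℝ) => p.1.mulVec p.2) := by
  apply measurable_pi_lambda; intro i
  simp only [Matrix.mulVec, dotProduct]
  exact Finset.measurable_sum _ (fun j _ =>
    ((meas_entry i j).comp measurable_fst).mul ((measurable_pi_apply j).comp measurable_snd))

lemma meas_row (i : Fin d) : Measurable (fun P : Matrix (Fin d) (Fin d) ℝ => P i) := by
  apply measurable_pi_lambda; intro j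
  exact meas_entry i j

instance : MeasurableSingletonClass (Matrix (Fin d) (Fin d) ℝ) :=
  inferInstanceAs (MeasurableSingletonClass (Fin d → Fin d → ℝ))

lemma orth_set_meas : MeasurableSet {P : Matrix (Fin d) (Fin d) ℝ | Pᵀ * P = 1} := by
  have h : Measurable (fun P : Matrix (Fin d) (Fin d) ℝ => Pᵀ * P) :=
    meas_mul2.comp (meas_transpose.prodMk measurable_id)
  exact h (measurableSet_singleton 1)

variable (ν : Measure (Matrix (Fin d) (Fin d) ℝ)) [IsProbabilityMeasure ν]

lemma transpose_map
    (hνsupp : ν {P : Matrix (Fin d) (Fin d) ℝ | Pᵀ * P = 1}ᶜ = 0)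
    (hνinv : ∀ U : Matrix (Fin d) (Fin d) ℝ, Uᵀ * U = 1 →
      Measure.map (fun P => U * P) ν = ν) :
    Measure.map (fun P : Matrix (Fin d) (Fin d) ℝ => Pᵀ) ν = ν := by
  set T := Measure.map (fun P : Matrix (Fin d) (Fin d) ℝ => Pᵀ) ν with hT
  haveI : IsProbabilityMeasure T := Measure.isProbabilityMeasure_map meas_transpose.aemeasurable
  have hνae : ∀ᵐ P ∂ν, Pᵀ * P = 1 := ae_iff.mpr hνsupp
  have hTae : ∀ᵐ g ∂T, gᵀ * g = 1 := by
    rw [hT, ae_map_iff meas_transpose.aemeasurable orth_set_meas]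
    filter_upwards [hνae] with P hP
    rw [Matrix.transpose_transpose]
    exact mul_eq_one_comm.mp hP
  ext A hA
  have hE : MeasurableSet {p : Matrix (Fin d) (Fin d) ℝ × Matrix (Fin d) (Fin d) ℝ | p.1 * p.2 ∈ A} :=
    meas_mul2 hA
  have c1 : (T.prod ν) {p | p.1 * p.2 ∈ A} = ν A := by
    rw [Measure.prod_apply hE]
    rw [lintegral_congr_ae (g := fun _ => ν A) ?_]
    · simp
    · filter_upwards [hTae] with g hg
      have hpre : Prod.mk g ⁻¹' {p : Matrix (Fin d) (Fin d) ℝ × Matrix (Fin d) (Fin d) ℝ | p.1 * p.2 ∈ A}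
          = (fun h => g * h) ⁻¹' A := rfl
      rw [hpre, ← Measure.map_apply (meas_mul_left g) hA, hνinv g hg]
  have c2 : (T.prod ν) {p | p.1 * p.2 ∈ A} = T A := by
    rw [Measure.prod_apply_symm hE]
    rw [lintegral_congr_ae (g := fun _ => T A) ?_]
    · simp
    · filter_upwards [hνae] with h hh
      have hpre : (fun g => (g, h)) ⁻¹' {p : Matrix (Fin d) (Fin d) ℝ × Matrix (Fin d) (Fin d) ℝ | p.1 * p.2 ∈ A}
          = (fun g => g * h) ⁻¹' A := rfl
      rw [hpre, hT, Measure.map_apply meas_transpose ((meas_mul_right h) hA)]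
      have hcomp : ((fun P : Matrix (Fin d) (Fin d) ℝ => Pᵀ) ⁻¹' ((fun g => g * h) ⁻¹' A))
          = (fun P => hᵀ * P) ⁻¹' ((fun P : Matrix (Fin d) (Fin d) ℝ => Pᵀ) ⁻¹' A) := by
        ext P
        simp only [Set.mem_preimage, Matrix.transpose_mul, Matrix.transpose_transpose]
      rw [hcomp, ← Measure.map_apply (meas_mul_left hᵀ) (meas_transpose hA)]
      rw [hνinv hᵀ (by rw [Matrix.transpose_transpose]; exact mul_eq_one_comm.mp hh)]
      rw [← Measure.map_apply meas_transpose hA]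
  rw [← c1, c2]

lemma right_inv
    (hνsupp : ν {P : Matrix (Fin d) (Fin d) ℝ | Pᵀ * P = 1}ᶜ = 0)
    (hνinv : ∀ U : Matrix (Fin d) (Fin d) ℝ, Uᵀ * U = 1 →
      Measure.map (fun P => U * P) ν = ν)
    (V : Matrix (Fin d) (Fin d) ℝ) (hV : Vᵀ * V = 1) :
    Measure.map (fun P => P * V) ν = ν := by
  conv_lhs => rw [← transpose_map ν hνsupp hνinv]
  rw [Measure.map_map (meas_mul_right V) meas_transpose]
  have hcomp : ((fun P : Matrix (Fin d) (Fin d) ℝ => P * V) ∘ fun P : Matrix (Fin d) (Fin d) ℝ => Pᵀ)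
      = (fun P : Matrix (Fin d) (Fin d) ℝ => Pᵀ) ∘ (fun P => Vᵀ * P) := by
    funext P
    simp [Function.comp, Matrix.transpose_mul]
  rw [hcomp, ← Measure.map_map meas_transpose (meas_mul_left Vᵀ),
    hνinv Vᵀ (by rw [Matrix.transpose_transpose]; exact mul_eq_one_comm.mp hV),
    transpose_map ν hνsupp hνinv]

end nu

section law
variable {d : ℕ}
variable (σ : Measure (Fin d → ℝ)) [IsProbabilityMeasure σ]
variable (ν : Measure (Matrix (Fin d) (Fin d) ℝ)) [IsProbabilityMeasure ν]

lemma mulVec_law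
    (hσsupp : σ {u : Fin d → ℝ | ∑ i, u i ^ 2 = 1}ᶜ = 0)
    (hσinv : ∀ U : Matrix (Fin d) (Fin d) ℝ, Uᵀ * U = 1 → Measure.map U.mulVec σ = σ)
    (hνsupp : ν {P : Matrix (Fin d) (Fin d) ℝ | Pᵀ * P = 1}ᶜ = 0)
    (hνinv : ∀ U : Matrix (Fin d) (Fin d) ℝ, Uᵀ * U = 1 →
      Measure.map (fun P => U * P) ν = ν)
    (u : Fin d → ℝ) (hu : ∑ i, u i ^ 2 = 1) :
    Measure.map (fun P : Matrix (Fin d) (Fin d) ℝ => P.mulVec u) ν = σ := by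
  have hνae : ∀ᵐ P ∂ν, Pᵀ * P = 1 := ae_iff.mpr hνsupp
  ext A hA
  rw [Measure.map_apply (meas_mulVec_pt u) hA]
  have hE : MeasurableSet {p : Matrix (Fin d) (Fin d) ℝ × (Fin d → ℝ) | p.1.mulVec p.2 ∈ A} :=
    meas_mulVec2 hA
  have c1 : (ν.prod σ) {p | p.1.mulVec p.2 ∈ A} = σ A := by
    rw [Measure.prod_apply hE]
    rw [lintegral_congr_ae (g := fun _ => σ A) ?_]
    · simp
    · filter_upwards [hνae] with P hP
      have hpre : Prod.mk P ⁻¹' {p : Matrix (Fin d) (Fin d) ℝ × (Fin d → ℝ) | p.1.mulVec p.2 ∈ A}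
          = P.mulVec ⁻¹' A := rfl
      rw [hpre, ← Measure.map_apply (meas_mulVec P) hA, hσinv P hP]
  have c2 : (ν.prod σ) {p | p.1.mulVec p.2 ∈ A} = ν ((fun P : Matrix (Fin d) (Fin d) ℝ => P.mulVec u) ⁻¹' A) := by
    rw [Measure.prod_apply_symm hE]
    rw [lintegral_congr_ae (g := fun _ => ν ((fun P : Matrix (Fin d) (Fin d) ℝ => P.mulVec u) ⁻¹' A)) ?_]
    · simp
    · filter_upwards [ae_sphere σ hσsupp] with w hw
      obtain ⟨V, hV1, _, hVu⟩ := exists_orth u w hu hw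
      have hpre : (fun P => (P, w)) ⁻¹' {p : Matrix (Fin d) (Fin d) ℝ × (Fin d → ℝ) | p.1.mulVec p.2 ∈ A}
          = (fun P : Matrix (Fin d) (Fin d) ℝ => P * V) ⁻¹' ((fun P : Matrix (Fin d) (Fin d) ℝ => P.mulVec u) ⁻¹' A) := by
        ext P
        simp only [Set.mem_preimage, Set.mem_setOf_eq, Matrix.mulVec_mulVec, ← hVu]
      rw [hpre, ← Measure.map_apply (meas_mul_right V) ((meas_mulVec_pt u) hA),
        right_inv ν hνsupp hνinv V hV1]
  rw [← c2, c1]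

lemma row_law
    (hσsupp : σ {u : Fin d → ℝ | ∑ i, u i ^ 2 = 1}ᶜ = 0)
    (hσinv : ∀ U : Matrix (Fin d) (Fin d) ℝ, Uᵀ * U = 1 → Measure.map U.mulVec σ = σ)
    (hνsupp : ν {P : Matrix (Fin d) (Fin d) ℝ | Pᵀ * P = 1}ᶜ = 0)
    (hνinv : ∀ U : Matrix (Fin d) (Fin d) ℝ, Uᵀ * U = 1 →
      Measure.map (fun P => U * P) ν = ν)
    (i : Fin d) :
    Measure.map (fun P : Matrix (Fin d) (Fin d) ℝ => P i) ν = σ := by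
  have hcomp : (fun P : Matrix (Fin d) (Fin d) ℝ => P i)
      = (fun M : Matrix (Fin d) (Fin d) ℝ => M.mulVec (Pi.single i 1)) ∘ (fun P => Pᵀ) := by
    funext P
    funext j
    simp only [Function.comp_apply, Matrix.mulVec, dotProduct, Matrix.transpose_apply]
    rw [Finset.sum_eq_single i]
    · simp
    · intro b _ hb; simp [Pi.single_apply, hb]
    · simp
  rw [hcomp, ← Measure.map_map (meas_mulVec_pt _) meas_transpose,
    transpose_map ν hνsupp hνinv,
    mulVec_law σ ν hσsupp hσinv hνsupp hνinv _ (single_sq_sum i)]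

end law
/-- Let `d ≥ 2`, let `u` be distributed according to the uniform
probability measure `σ` on the unit sphere `S^{d-1}`, let `x ∈ ℝ^d` be a unit vector, and
`y ∈ ℝ^d` arbitrary.  Then
`E[⟨u, y⟩ · sign(⟨u, x⟩)] = E[|u_1|] · ⟨x, y⟩`.
Consequently, for the 1-bit quantizer with reconstruction
`x̃ = √(2/(πd)) · Πᵀ · sign(Π x)` (`Π` Haar-random orthogonal, formalized via a probability
measure `ν` supported on orthogonal matrices and invariant under left multiplication by
orthogonal matrices), the estimator `⟨y, x̃⟩` has expectation
`√(2/(πd)) · d · E[|u_1|] · ⟨x, y⟩`, a multiplicatively biased estimate of `⟨x, y⟩`. -/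
theorem statement_17 (d : ℕ) (hd : 2 ≤ d) (x y : Fin d → ℝ) (hx : ∑ i, x i ^ 2 = 1)
    (σ : Measure (Fin d → ℝ)) [IsProbabilityMeasure σ]
    (hσsupp : σ {u : Fin d → ℝ | ∑ i, u i ^ 2 = 1}ᶜ = 0)
    (hσinv : ∀ U : Matrix (Fin d) (Fin d) ℝ, Uᵀ * U = 1 →
      Measure.map U.mulVec σ = σ)
    (ν : Measure (Matrix (Fin d) (Fin d) ℝ)) [IsProbabilityMeasure ν]
    (hνsupp : ν {P : Matrix (Fin d) (Fin d) ℝ | Pᵀ * P = 1}ᶜ = 0)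
    (hνinv : ∀ U : Matrix (Fin d) (Fin d) ℝ, Uᵀ * U = 1 →
      Measure.map (fun P => U * P) ν = ν) :
    (∫ u, (∑ i, u i * y i) * (if 0 ≤ ∑ i, u i * x i then (1 : ℝ) else -1) ∂σ)
      = (∫ u, |u ⟨0, by omega⟩| ∂σ) * ∑ i, x i * y i ∧
    (∫ P, ∑ j, y j * (Real.sqrt (2 / (π * d)) *
          Pᵀ.mulVec (fun i => if 0 ≤ P.mulVec x i then (1 : ℝ) else -1) j) ∂ν)
      = Real.sqrt (2 / (π * d)) * d * (∫ u, |u ⟨0, by omega⟩| ∂σ) *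
          ∑ i, x i * y i := by
  have hd0 : 0 < d := by omega
  have hpart1 := part1 hd0 x y hx σ hσsupp hσinv
  refine ⟨hpart1, ?_⟩
  set s := Real.sqrt (2 / (π * d)) with hs
  set g : (Fin d → ℝ) → ℝ := fun r =>
    (∑ j, r j * y j) * (if 0 ≤ ∑ j, r j * x j then (1 : ℝ) else -1) with hg
  have g_meas : Measurable g := (meas_dot y).mul (meas_sign x)
  -- pointwise rewrite of the integrand
  have hpt : ∀ P : Matrix (Fin d) (Fin d) ℝ,
      (∑ j, y j * (s * Pᵀ.mulVec (fun i => if 0 ≤ P.mulVec x i then (1 : ℝ) else -1) j))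
        = s * ∑ i, g (P i) := by
    intro P
    set sg : Fin d → ℝ := fun i => if 0 ≤ P.mulVec x i then (1 : ℝ) else -1 with hsg
    have e1 : ∀ j, Pᵀ.mulVec sg j = ∑ i, P i j * sg i := by
      intro j
      simp only [Matrix.mulVec, dotProduct, Matrix.transpose_apply]
    have e2 : ∑ j, y j * (s * Pᵀ.mulVec sg j) = ∑ j, ∑ i, s * (P i j * y j * sg i) := by
      apply Finset.sum_congr rfl
      intro j _
      rw [e1 j, Finset.mul_sum, Finset.mul_sum]
      apply Finset.sum_congr rfl
      intros; ring
    rw [e2, Finset.sum_comm, Finset.mul_sum]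
    apply Finset.sum_congr rfl
    intro i _
    rw [← Finset.mul_sum]
    congr 1
    have hsgi : sg i = if 0 ≤ ∑ j, P i j * x j then (1 : ℝ) else -1 := by
      rw [hsg]
      simp only [Matrix.mulVec, dotProduct]
    simp only [hg]
    rw [← hsgi, Finset.sum_mul]
  simp only [hpt]
  rw [integral_const_mul]
  -- integrability of g on the sphere
  have hgint : Integrable g σ := by
    apply integrable_of_sphere_bound σ hσsupp g_meas (Real.sqrt (∑ i, y i ^ 2))
    intro u hu
    simp only [hg]
    rw [abs_mul]
    have h1 : |if 0 ≤ ∑ j, u j * x j then (1:ℝ) else -1| = 1 := by split <;> simp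
    rw [h1, mul_one]
    exact cs_sphere hu
  have hrow : ∀ i : Fin d, Measure.map (fun P : Matrix (Fin d) (Fin d) ℝ => P i) ν = σ :=
    fun i => row_law σ ν hσsupp hσinv hνsupp hνinv i
  have hint_i : ∀ i : Fin d, Integrable (fun P : Matrix (Fin d) (Fin d) ℝ => g (P i)) ν := by
    intro i
    have := (integrable_map_measure g_meas.aestronglyMeasurable (meas_row i).aemeasurable).mp
      (by rw [hrow i]; exact hgint)
    exact this
  rw [integral_finset_sum _ (fun i _ => hint_i i)]
  have hval : ∀ i : Fin d, (∫ P, g (P i) ∂ν) = (∫ u, |u ⟨0, hd0⟩| ∂σ) * ∑ i, x i * y i := by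
    intro i
    have hmap := integral_map (μ := ν) (φ := fun P : Matrix (Fin d) (Fin d) ℝ => P i) (f := g)
      (meas_row i).aemeasurable (by rw [hrow i]; exact g_meas.aestronglyMeasurable)
    rw [hrow i] at hmap
    rw [← hmap]
    exact hpart1
  simp only [hval]
  rw [Finset.sum_const, Finset.card_univ, Fintype.card_fin, nsmul_eq_mul]
  ring
end
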